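/- For every point z on the boundary of a finite cone C_{ρ,h}(u) with vertex u, opening angle ρ ∈ (0,π] and height h, there exists a finite cone with vertex z, opening angle ρ' and height h' contained in C_{ρ,h}(u), where h' = (h/2)·sin(ρ/2) and ρ' = (π−ρ)/2 if ρ > π/3, ρ' = ρ if ρ ≤ π/3. -/

import Mathlib

open MeasureTheory Metric Set Filter

noncomputable section

/-- The open finite cone with vertex `x`, axis `ξ`, opening angle `ρ` and height `h`. -/
def fcone (d : ℕ) (ρ h : ℝ) (x ξ : EuclideanSpace ℝ (Fin d)) :
    Set (EuclideanSpace ℝ (Fin d)) :=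
  {z | z ≠ x ∧ (inner ℝ ξ (‖z - x‖⁻¹ • (z - x)) : ℝ) > Real.cos (ρ / 2)} ∩ Metric.ball x h

/-- `S` is `ρ,h`-cone-convex. -/
def ConeConvex (d : ℕ) (ρ h : ℝ) (S : Set (EuclideanSpace ℝ (Fin d))) : Prop :=
  ∀ x ∈ frontier S, ∃ ξ : EuclideanSpace ℝ (Fin d), ‖ξ‖ = 1 ∧ fcone d ρ h x ξ ⊆ Sᶜ

/-- The `ρ,h`-cone-convex hull by complement. -/
def cccHull (d : ℕ) (ρ h : ℝ) (S : Set (EuclideanSpace ℝ (Fin d))) :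
    Set (EuclideanSpace ℝ (Fin d)) :=
  ⋂₀ {A | ∃ y ξ : EuclideanSpace ℝ (Fin d),
      ‖ξ‖ = 1 ∧ fcone d ρ h y ξ ∩ S = ∅ ∧ A = (fcone d ρ h y ξ)ᶜ}

/-- The `ρ,h`-cone-convex hull: intersection of all compact `ρ,h`-cone-convex supersets. -/
def ccHull (d : ℕ) (ρ h : ℝ) (S : Set (EuclideanSpace ℝ (Fin d))) :
    Set (EuclideanSpace ℝ (Fin d)) :=
  ⋂₀ {B | S ⊆ B ∧ IsCompact B ∧ B.Nonempty ∧ ConeConvex d ρ h B}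

set_option maxHeartbeats 1000000

lemma fcone_eq (d : ℕ) (ρ h : ℝ) (u ξ : EuclideanSpace ℝ (Fin d)) :
    fcone d ρ h u ξ =
      {w | Real.cos (ρ/2) * ‖w - u‖ < (inner ℝ ξ (w - u) : ℝ)} ∩ Metric.ball u h := by
  ext w
  simp only [fcone, mem_inter_iff, mem_setOf_eq, gt_iff_lt]
  constructor
  · rintro ⟨⟨hne, hin⟩, hb⟩
    have hn : 0 < ‖w - u‖ := by
      rw [norm_pos_iff]; exact sub_ne_zero.mpr hne
    rw [real_inner_smul_right, ← div_eq_inv_mul] at hin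
    exact ⟨(lt_div_iff₀ hn).mp hin, hb⟩
  · rintro ⟨hin, hb⟩
    have hne : w ≠ u := by
      rintro rfl
      simp at hin
    have hn : 0 < ‖w - u‖ := by rw [norm_pos_iff]; exact sub_ne_zero.mpr hne
    refine ⟨⟨hne, ?_⟩, hb⟩
    rw [real_inner_smul_right, ← div_eq_inv_mul]
    exact (lt_div_iff₀ hn).mpr hin

lemma fcone_isOpen (d : ℕ) (ρ h : ℝ) (u ξ : EuclideanSpace ℝ (Fin d)) :
    IsOpen (fcone d ρ h u ξ) := by
  rw [fcone_eq]
  refine IsOpen.inter (isOpen_lt ?_ ?_) isOpen_ball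
  · exact continuous_const.mul ((continuous_id.sub continuous_const).norm)
  · exact Continuous.inner continuous_const (continuous_id.sub continuous_const)

lemma fcone_convex (d : ℕ) (ρ h : ℝ) (u ξ : EuclideanSpace ℝ (Fin d))
    (hc : 0 ≤ Real.cos (ρ/2)) :
    Convex ℝ (fcone d ρ h u ξ) := by
  rw [fcone_eq]
  refine Convex.inter ?_ (convex_ball u h)
  intro w₁ hw₁ w₂ hw₂ α β hα hβ hαβ
  simp only [mem_setOf_eq] at *
  have hcombo : (α • w₁ + β • w₂) - u = α • (w₁ - u) + β • (w₂ - u) := by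
    rw [smul_sub, smul_sub]
    rw [show α • w₁ - α • u + (β • w₂ - β • u) = α • w₁ + β • w₂ - (α • u + β • u) by abel]
    rw [← add_smul, hαβ, one_smul]
  rw [hcombo, inner_add_right, real_inner_smul_right, real_inner_smul_right]
  have hn : ‖α • (w₁ - u) + β • (w₂ - u)‖ ≤ α * ‖w₁ - u‖ + β * ‖w₂ - u‖ := by
    calc ‖α • (w₁ - u) + β • (w₂ - u)‖ ≤ ‖α • (w₁ - u)‖ + ‖β • (w₂ - u)‖ := norm_add_le _ _
    _ = α * ‖w₁ - u‖ + β * ‖w₂ - u‖ := by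
        rw [norm_smul, norm_smul, Real.norm_eq_abs, Real.norm_eq_abs, abs_of_nonneg hα,
          abs_of_nonneg hβ]
  have key : Real.cos (ρ/2) * ‖α • (w₁ - u) + β • (w₂ - u)‖ ≤
      α * (Real.cos (ρ/2) * ‖w₁ - u‖) + β * (Real.cos (ρ/2) * ‖w₂ - u‖) := by
    have := mul_le_mul_of_nonneg_left hn hc
    nlinarith
  rcases eq_or_lt_of_le hα with rfl0 | hα'
  · have hβ1 : β = 1 := by linarith
    have t2 : β * (Real.cos (ρ/2) * ‖w₂ - u‖) < β * inner ℝ ξ (w₂ - u) := by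
      rw [hβ1, one_mul, one_mul]; exact hw₂
    have t1 : α * (Real.cos (ρ/2) * ‖w₁ - u‖) = α * inner ℝ ξ (w₁ - u) := by
      rw [← rfl0]; ring
    linarith
  · have t1 : α * (Real.cos (ρ/2) * ‖w₁ - u‖) < α * inner ℝ ξ (w₁ - u) :=
      mul_lt_mul_of_pos_left hw₁ hα'
    have t2 : β * (Real.cos (ρ/2) * ‖w₂ - u‖) ≤ β * inner ℝ ξ (w₂ - u) :=
      mul_le_mul_of_nonneg_left (le_of_lt hw₂) hβ
    linarith

lemma fcone_closure (d : ℕ) (ρ h : ℝ) (u ξ : EuclideanSpace ℝ (Fin d)) :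
    closure (fcone d ρ h u ξ) ⊆
      {w | Real.cos (ρ/2) * ‖w - u‖ ≤ (inner ℝ ξ (w - u) : ℝ)} ∩ Metric.closedBall u h := by
  apply closure_minimal
  · rw [fcone_eq]
    rintro w ⟨hin, hb⟩
    simp only [mem_setOf_eq] at hin ⊢
    exact ⟨le_of_lt hin, ball_subset_closedBall hb⟩
  · refine IsClosed.inter (isClosed_le ?_ ?_) Metric.isClosed_closedBall
    · exact continuous_const.mul ((continuous_id.sub continuous_const).norm)
    · exact Continuous.inner continuous_const (continuous_id.sub continuous_const)

lemma ball_subset_fcone (d : ℕ) (ρ h : ℝ) (u ξ : EuclideanSpace ℝ (Fin d))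
    (hξ : ‖ξ‖ = 1) (hh : 0 < h) (hc : 0 ≤ Real.cos (ρ/2)) (hs : 0 < Real.sin (ρ/2)) :
    Metric.ball (u + (h/(1+Real.sin (ρ/2))) • ξ) ((h/(1+Real.sin (ρ/2))) * Real.sin (ρ/2))
      ⊆ fcone d ρ h u ξ := by
  set c := Real.cos (ρ/2) with hcdef
  set s := Real.sin (ρ/2) with hsdef
  have hs1 : s ≤ 1 := Real.sin_le_one _
  have hpyth : s^2 + c^2 = 1 := Real.sin_sq_add_cos_sq _
  set L : ℝ := h/(1+s) with hLdef
  have hL : 0 < L := by positivity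
  have hLh : L * (1+s) = h := by
    rw [hLdef]; exact div_mul_cancel₀ h (ne_of_gt (by linarith))
  intro b hb
  rw [mem_ball_iff_norm] at hb
  set p := b - (u + L • ξ) with hpdef
  set P := ‖p‖ with hPdef
  have hP0 : 0 ≤ P := norm_nonneg _
  have hPL : P < L * s := hb
  have hbu : b - u = L • ξ + p := by
    rw [hpdef]; abel
  set x : ℝ := inner ℝ ξ p with hxdef
  have hxP : |x| ≤ P := by
    calc |x| ≤ ‖ξ‖ * ‖p‖ := abs_real_inner_le_norm _ _
    _ = P := by rw [hξ, one_mul]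
  have hxl : -P ≤ x := (abs_le.mp hxP).1
  have hxu : x ≤ P := (abs_le.mp hxP).2
  have hinner : (inner ℝ ξ (b - u) : ℝ) = L + x := by
    rw [hbu, inner_add_right, real_inner_smul_right, real_inner_self_eq_norm_sq, hξ]
    ring
  have hnormsq : ‖b - u‖^2 = L^2 + 2*L*x + P^2 := by
    rw [hbu, norm_add_sq_real, norm_smul, real_inner_smul_left, Real.norm_eq_abs,
      abs_of_pos hL, hξ]
    ring_nf
    rw [← hxdef, ← hPdef]
  have hLx : 0 < L + x := by nlinarith
  rw [fcone_eq]
  constructor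
  · show c * ‖b - u‖ < (inner ℝ ξ (b - u) : ℝ)
    rw [hinner]
    rcases eq_or_lt_of_le hc with hc0 | hc0
    · rw [← hc0, zero_mul]; exact hLx
    · have hc2 : c^2 = 1 - s^2 := by nlinarith
      have h1s : 0 < 1 - s^2 := by nlinarith [pow_pos hc0 2]
      have hP2 : P^2 < s^2 * L^2 := by
        have := mul_self_lt_mul_self hP0 hPL
        nlinarith
      have hsq : (c * ‖b - u‖)^2 < (L + x)^2 := by
        have e : (c * ‖b - u‖)^2 = c^2 * (L^2 + 2*L*x + P^2) := by
          rw [mul_pow, hnormsq]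
        rw [e, hc2]
        nlinarith [sq_nonneg (x + L*s^2), mul_pos h1s (sub_pos.mpr hP2)]
      exact lt_of_pow_lt_pow_left₀ 2 (le_of_lt hLx) hsq
  · rw [mem_ball_iff_norm]
    calc ‖b - u‖ ≤ ‖L • ξ‖ + ‖p‖ := by rw [hbu]; exact norm_add_le _ _
    _ = L + P := by rw [norm_smul, Real.norm_eq_abs, abs_of_pos hL, hξ]; ring
    _ < L + L*s := by linarith
    _ = h := by rw [← hLh]; ring
lemma polykey (x y : ℝ) (hx0 : 0 ≤ x) (hx : x ≤ 1/2) (hy : 0 ≤ y) (hxy : x^2 + y^2 = 1) :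
    (1 + 4*y^4 - 8*x*y^3) * x^2 ≤ (1 - 2*x^2)^2 := by
  have hy1 : y ≤ 1 := by nlinarith
  have hyy : 1 - x^2 ≤ y := by nlinarith
  have hG : 0 ≤ 1 - 8*x^2 + 4*x^4 + 8*x^3*y := by
    nlinarith [mul_nonneg (pow_nonneg hx0 3) (sub_nonneg.mpr hyy),
      mul_nonneg (by linarith : (0:ℝ) ≤ 1 - 2*x) (by nlinarith [sq_nonneg (2*x^2-1)] : (0:ℝ) ≤ (2*x^2-1)^2 + 2*x)]
  have hFG : (1 - 2*x^2)^2 - (1+4*y^4-8*x*y^3)*x^2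
      = y^2*(1 - 8*x^2 + 4*x^4 + 8*x^3*y) := by
    linear_combination (4*x^2 - 1 - 4*x^2*y^2) * hxy
  nlinarith [mul_nonneg (sq_nonneg y) hG]

lemma main_aux {d : ℕ} {ρ h ρ' h' : ℝ} (hρ : ρ ∈ Set.Ioc 0 Real.pi) (hh : 0 < h)
    (hh' : h' = h / 2 * Real.sin (ρ / 2))
    (u ξ : EuclideanSpace ℝ (Fin d)) (hξ : ‖ξ‖ = 1)
    (z : EuclideanSpace ℝ (Fin d)) (hz : z ∈ frontier (fcone d ρ h u ξ))
    (hs2s : Real.sin (ρ'/2) ≤ Real.sin (ρ/2)) (hs20 : 0 ≤ Real.sin (ρ'/2))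
    (hI1 : 1 + Real.sin (ρ/2) ≤ 2 * Real.cos (ρ'/2))
    (hI2 : (1 + (1 + Real.sin (ρ/2))^2 - 2*Real.cos (ρ/2)*(1 + Real.sin (ρ/2)))
        * Real.sin (ρ'/2)^2 ≤ Real.sin (ρ/2)^2) :
    ∃ ν : EuclideanSpace ℝ (Fin d), ‖ν‖ = 1 ∧ fcone d ρ' h' z ν ⊆ fcone d ρ h u ξ := by
  obtain ⟨hρ0, hρπ⟩ := hρ
  set s := Real.sin (ρ/2) with hsdef
  set c := Real.cos (ρ/2) with hcdef
  set s₂ := Real.sin (ρ'/2) with hs2def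
  set c₂ := Real.cos (ρ'/2) with hc2def
  have hpi : (0:ℝ) < Real.pi := Real.pi_pos
  have hs : 0 < s := Real.sin_pos_of_pos_of_lt_pi (by linarith) (by linarith)
  have hs1 : s ≤ 1 := Real.sin_le_one _
  have hc : 0 ≤ c := Real.cos_nonneg_of_mem_Icc ⟨by linarith, by linarith⟩
  have hpyth : s^2 + c^2 = 1 := Real.sin_sq_add_cos_sq _
  have hpyth2 : s₂^2 + c₂^2 = 1 := Real.sin_sq_add_cos_sq _
  have hc2 : 0 < c₂ := by linarith only [hI1, hs]
  clear_value s c s₂ c₂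
  set L : ℝ := h/(1+s) with hLdef
  have hL : 0 < L := by positivity
  have hLh : L * (1+s) = h := by rw [hLdef]; exact div_mul_cancel₀ h (ne_of_gt (by linarith))
  clear_value L
  have hh'0 : 0 < h' := by rw [hh']; positivity
  -- frontier facts
  have hzc : z ∈ closure (fcone d ρ h u ξ) := frontier_subset_closure hz
  obtain ⟨hK, hBall⟩ := fcone_closure d ρ h u ξ hzc
  simp only [mem_setOf_eq] at hK
  rw [Metric.mem_closedBall, dist_eq_norm] at hBall
  have hnz : z ∉ fcone d ρ h u ξ := by
    have h2 := hz.2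
    rwa [(fcone_isOpen d ρ h u ξ).interior_eq] at h2
  set r := ‖z - u‖ with hrdef
  have hr0 : 0 ≤ r := norm_nonneg _
  set τ : ℝ := inner ℝ ξ (z - u) with hτdef
  have hK' : c * r ≤ τ := by rw [hcdef]; exact hK
  clear_value r τ
  -- the aimed point and direction
  set m := u + L • ξ with hmdef
  set q := m - z with hqdef
  have hqa : q = L • ξ - (z - u) := by rw [hqdef, hmdef]; abel
  have hqsq : ‖q‖^2 = L^2 - 2*L*τ + r^2 := by
    rw [hqa, norm_sub_sq_real, norm_smul, real_inner_smul_left, Real.norm_eq_abs,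
      abs_of_pos hL, hξ, ← hτdef, ← hrdef]
    ring_nf
  clear_value q m
  -- lower bound on ‖q‖
  have hqlow : L * s ≤ ‖q‖ := by
    rw [fcone_eq] at hnz
    have hcase : τ ≤ c * r ∨ h ≤ r := by
      by_contra hcon
      push_neg at hcon
      refine hnz ⟨?_, by rw [Metric.mem_ball, dist_eq_norm, ← hrdef]; exact hcon.2⟩
      show Real.cos (ρ/2) * ‖z - u‖ < (inner ℝ ξ (z - u) : ℝ)
      rw [← hcdef, ← hrdef, ← hτdef]; exact hcon.1
    rcases hcase with hcase | hcase
    · have heq : τ = c * r := le_antisymm hcase hK'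
      have hsq : (L*s)^2 ≤ ‖q‖^2 := by
        have e : ‖q‖^2 = (r - L*c)^2 + (L*s)^2 := by
          rw [hqsq, heq]; linear_combination (-(L^2)) * hpyth
        linarith only [e, sq_nonneg (r - L*c)]
      exact le_of_pow_le_pow_left₀ two_ne_zero (norm_nonneg q) hsq
    · have h1 : ‖z - u‖ - ‖L • ξ‖ ≤ ‖(z - u) - L • ξ‖ := norm_sub_norm_le _ _
      rw [← hrdef] at h1
      have h2 : ‖(z - u) - L • ξ‖ = ‖q‖ := by rw [hqa, norm_sub_rev]
      have h3 : ‖L • ξ‖ = L := by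
        rw [norm_smul, Real.norm_eq_abs, abs_of_pos hL, hξ, mul_one]
      have h4 : L * s = h - L := by rw [← hLh]; ring
      linarith
  have hq0 : 0 < ‖q‖ := lt_of_lt_of_le (by positivity) hqlow
  -- upper bound : s₂ * ‖q‖ ≤ L * s
  have hqup : s₂ * ‖q‖ ≤ L * s := by
    have hq1 : ‖q‖^2 ≤ L^2 - 2*L*c*r + r^2 := by
      have hmul := mul_le_mul_of_nonneg_left hK' (le_of_lt hL)
      linarith only [hqsq, hmul]
    have hsq : (s₂*‖q‖)^2 ≤ (L*s)^2 := by
      have hs22 : s₂^2 ≤ s^2 := by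
        nlinarith only [mul_self_le_mul_self hs20 hs2s]
      rcases le_or_gt (r^2) (2*L*c*r) with hcc | hcc
      · have hqL : ‖q‖^2 ≤ L^2 := by linarith
        nlinarith only [mul_le_mul_of_nonneg_left hqL (sq_nonneg s₂),
          mul_le_mul_of_nonneg_right hs22 (sq_nonneg L)]
      · have hr2 : 2*L*c < r := by nlinarith only [hcc, hr0]
        have hq2 : ‖q‖^2 ≤ L^2 + h^2 - 2*L*c*h := by
          nlinarith only [hq1, mul_nonneg (sub_nonneg.mpr hBall)
            (by linarith only [hr2, hr0, hh] : (0:ℝ) ≤ h + r - 2*L*c)]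
        have e3 : s₂^2*(L^2 + h^2 - 2*L*c*h)
            = ((1 + (1+s)^2 - 2*c*(1+s))*s₂^2)*L^2 := by
          rw [← hLh]; ring
        nlinarith only [e3, mul_le_mul_of_nonneg_left hq2 (sq_nonneg s₂),
          mul_le_mul_of_nonneg_right hI2 (sq_nonneg L)]
    exact le_of_pow_le_pow_left₀ two_ne_zero (by positivity) hsq
  -- C3
  have hC3 : h' ≤ c₂ * ‖q‖ := by
    have e1 : h' = ((1+s)/2)*(L*s) := by rw [hh', ← hLh]; ring
    calc h' = ((1+s)/2)*(L*s) := e1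
    _ ≤ c₂ * (L*s) := mul_le_mul_of_nonneg_right (by linarith) (by positivity)
    _ ≤ c₂ * ‖q‖ := mul_le_mul_of_nonneg_left hqlow (le_of_lt hc2)
  -- the axis
  have hqne : q ≠ 0 := norm_pos_iff.mp hq0
  refine ⟨‖q‖⁻¹ • q, by
    rw [norm_smul, norm_inv, norm_norm, inv_mul_cancel₀ (ne_of_gt hq0)], ?_⟩
  intro y hy
  rw [fcone_eq] at hy
  obtain ⟨hy1, hy2⟩ := hy
  simp only [mem_setOf_eq] at hy1
  rw [Metric.mem_ball, dist_eq_norm] at hy2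
  set v := y - z with hvdef
  clear_value v
  set t := ‖v‖ with htdef
  have hth : t < h' := hy2
  rw [← hc2def] at hy1
  have hcs : (inner ℝ (‖q‖⁻¹ • q) v : ℝ) ≤ t := by
    have h1 : (inner ℝ (‖q‖⁻¹ • q) v : ℝ) ≤ ‖(‖q‖⁻¹ • q)‖ * ‖v‖ := real_inner_le_norm _ _
    have h2 : ‖(‖q‖⁻¹ • q)‖ = 1 := by
      rw [norm_smul, norm_inv, norm_norm, inv_mul_cancel₀ (ne_of_gt hq0)]
    rwa [h2, one_mul, ← htdef] at h1
  have ht0 : 0 < t := by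
    rcases lt_or_eq_of_le (norm_nonneg v) with h0 | h0
    · rw [htdef]; exact h0
    · exfalso
      have ht00 : t = 0 := by rw [htdef, ← h0]
      rw [ht00, mul_zero] at hy1
      linarith
  set QV : ℝ := (inner ℝ q v : ℝ) with hQVdef
  have hQV : c₂ * t * ‖q‖ < QV := by
    rw [real_inner_smul_left, ← hQVdef] at hy1
    have h2 := mul_lt_mul_of_pos_right hy1 hq0
    calc c₂ * t * ‖q‖ = (c₂ * t) * ‖q‖ := by ring
    _ < (‖q‖⁻¹ * QV) * ‖q‖ := h2
    _ = QV := by field_simp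
  clear_value QV t
  have hQVt : t^2 < QV := by
    calc t^2 = t * t := pow_two t
    _ < h' * t := mul_lt_mul_of_pos_right hth ht0
    _ ≤ (c₂ * ‖q‖) * t := mul_le_mul_of_nonneg_right hC3 ht0.le
    _ = c₂ * t * ‖q‖ := by ring
    _ < QV := hQV
  have hQV0 : 0 < QV := lt_trans (by positivity) hQVt
  set μ : ℝ := QV / t^2 with hμdef
  have hμ1 : 1 < μ := (one_lt_div (by positivity)).mpr hQVt
  have hμ0 : 0 < μ := by linarith
  have hμt : QV = μ * t^2 := by rw [hμdef]; field_simp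
  clear_value μ
  set b := z + μ • v with hbdef
  clear_value b
  have hbm : b - m = μ • v - q := by rw [hbdef, hqdef]; abel
  have hbmsq : ‖b - m‖^2 = ‖q‖^2 - μ^2*t^2 := by
    rw [hbm, norm_sub_sq_real, norm_smul, real_inner_smul_left, real_inner_comm,
      Real.norm_eq_abs, abs_of_pos hμ0, ← hQVdef, ← htdef, hμt]
    ring
  have hμtc : c₂ * ‖q‖ < μ * t := by
    have h1 : (c₂ * ‖q‖) * t < (μ * t) * t := by
      have e : (μ * t) * t = μ * t^2 := by ring
      rw [e, ← hμt]
      calc (c₂*‖q‖)*t = c₂ * t * ‖q‖ := by ring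
      _ < QV := hQV
    exact lt_of_mul_lt_mul_right h1 (le_of_lt ht0)
  have hbml : ‖b - m‖ < L * s := by
    have h1 : ‖b - m‖^2 < (L*s)^2 := by
      have h2 : (c₂*‖q‖)^2 < (μ*t)^2 := by
        have h2' := mul_self_lt_mul_self (by positivity) hμtc
        calc (c₂*‖q‖)^2 = (c₂*‖q‖)*(c₂*‖q‖) := pow_two _
        _ < (μ*t)*(μ*t) := h2'
        _ = (μ*t)^2 := (pow_two _).symm
      have h3 : (s₂*‖q‖)^2 ≤ (L*s)^2 := by
        have h3' := mul_self_le_mul_self (mul_nonneg hs20 (norm_nonneg q)) hqup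
        calc (s₂*‖q‖)^2 = (s₂*‖q‖)*(s₂*‖q‖) := pow_two _
        _ ≤ (L*s)*(L*s) := h3'
        _ = (L*s)^2 := (pow_two _).symm
      have e4 : s₂^2*‖q‖^2 + c₂^2*‖q‖^2 = ‖q‖^2 := by
        calc s₂^2*‖q‖^2 + c₂^2*‖q‖^2 = (s₂^2+c₂^2)*‖q‖^2 := by ring
        _ = ‖q‖^2 := by rw [hpyth2]; ring
      nlinarith only [h2, h3, e4, hbmsq]
    exact lt_of_pow_lt_pow_left₀ 2 (by positivity) h1
  have hbf : b ∈ fcone d ρ h u ξ := by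
    apply ball_subset_fcone d ρ h u ξ hξ hh (by rw [← hcdef]; exact hc)
      (by rw [← hsdef]; exact hs)
    rw [Metric.mem_ball, dist_eq_norm, ← hsdef, ← hLdef, ← hmdef]
    exact hbml
  have hy_eq : (1 - μ⁻¹) • z + μ⁻¹ • b = y := by
    rw [hbdef, smul_add, smul_smul, inv_mul_cancel₀ (ne_of_gt hμ0), one_smul, sub_smul,
      one_smul]
    rw [hvdef]
    abel
  have h5 : (0:ℝ) ≤ 1 - μ⁻¹ := by
    have h6 : μ⁻¹ ≤ 1 := by
      rw [inv_le_one_iff₀]; right; linarith only [hμ1]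
    linarith only [h6]
  have hmem := (fcone_convex d ρ h u ξ (by rw [← hcdef]; exact hc)).combo_closure_interior_mem_interior
    (a := 1 - μ⁻¹) (b := μ⁻¹) hzc
    (by rw [(fcone_isOpen d ρ h u ξ).interior_eq]; exact hbf)
    h5 (inv_pos.mpr hμ0) (by ring)
  rw [hy_eq, (fcone_isOpen d ρ h u ξ).interior_eq] at hmem
  exact hmem
theorem stmt_6 {d : ℕ} {ρ h ρ' h' : ℝ} (hρ : ρ ∈ Set.Ioc 0 Real.pi) (hh : 0 < h)
    (hh' : h' = h / 2 * Real.sin (ρ / 2))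
    (hρ' : ρ' = if ρ > Real.pi / 3 then (Real.pi - ρ) / 2 else ρ)
    (u ξ : EuclideanSpace ℝ (Fin d)) (hξ : ‖ξ‖ = 1)
    (z : EuclideanSpace ℝ (Fin d)) (hz : z ∈ frontier (fcone d ρ h u ξ)) :
    ∃ ν : EuclideanSpace ℝ (Fin d), ‖ν‖ = 1 ∧ fcone d ρ' h' z ν ⊆ fcone d ρ h u ξ := by
  obtain ⟨hρ0, hρπ⟩ := hρ
  have hpi := Real.pi_pos
  by_cases hbig : ρ > Real.pi / 3
  · -- large angle : ρ' = (π - ρ)/2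
    have hρ'eq : ρ' = (Real.pi - ρ)/2 := by rw [hρ', if_pos hbig]
    set β := (Real.pi - ρ)/4 with hβ
    have hβ0 : 0 ≤ β := by rw [hβ]; linarith
    have hβ6 : β ≤ Real.pi/6 := by rw [hβ]; linarith
    have hρ'2 : ρ'/2 = β := by rw [hρ'eq, hβ]; ring
    have hρ2 : ρ/2 = Real.pi/2 - 2*β := by rw [hβ]; ring
    have hsρ : Real.sin (ρ/2) = Real.cos (2*β) := by rw [hρ2, Real.sin_pi_div_two_sub]
    have hcρ : Real.cos (ρ/2) = Real.sin (2*β) := by rw [hρ2, Real.cos_pi_div_two_sub]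
    set x := Real.sin β with hx
    set y := Real.cos β with hy
    have hx0 : 0 ≤ x := Real.sin_nonneg_of_nonneg_of_le_pi hβ0 (by linarith)
    have hy0 : 0 ≤ y := Real.cos_nonneg_of_mem_Icc ⟨by linarith, by linarith⟩
    have hy1 : y ≤ 1 := Real.cos_le_one β
    have hpyth : x^2 + y^2 = 1 := Real.sin_sq_add_cos_sq β
    have hx12 : x ≤ 1/2 := by
      have := Real.sin_le_sin_of_le_of_le_pi_div_two (by linarith : -(Real.pi/2) ≤ β)
        (by linarith : Real.pi/6 ≤ Real.pi/2) hβ6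
      rwa [Real.sin_pi_div_six] at this
    have hcos2 : Real.cos (2*β) = 1 - 2*x^2 := by
      rw [Real.cos_two_mul]
      linarith only [hpyth]
    have hsin2 : Real.sin (2*β) = 2*x*y := Real.sin_two_mul β
    apply main_aux ⟨hρ0, hρπ⟩ hh hh' u ξ hξ z hz
    · rw [hρ'2, hsρ, hcos2]
      nlinarith only [hx0, hx12]
    · rw [hρ'2]; exact hx0
    · rw [hρ'2, hsρ, hcos2]
      show 1 + (1 - 2*x^2) ≤ 2 * y
      nlinarith only [hpyth, hy0, hy1]
    · rw [hρ'2, hsρ, hcρ, hcos2, hsin2]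
      have ebr : 1 + (1 + (1 - 2*x^2))^2 - 2*(2*x*y)*(1 + (1 - 2*x^2))
          = 1 + 4*y^4 - 8*x*y^3 := by
        linear_combination (-(4-4*x^2+4*y^2-8*x*y)) * hpyth
      rw [ebr]
      have key := polykey x y hx0 hx12 hy0 hpyth
      have e2 : (1 - 2*x^2)^2 = Real.cos (2*β)^2 := by rw [hcos2]
      calc (1 + 4*y^4 - 8*x*y^3) * Real.sin β ^2 ≤ (1 - 2*x^2)^2 := key
      _ = Real.cos (2*β)^2 := e2
      _ = (1 - 2*x^2)^2 := by rw [hcos2]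
  · -- small angle : ρ' = ρ
    have hρ'eq : ρ' = ρ := by rw [hρ', if_neg hbig]
    push_neg at hbig
    have hs0 : 0 ≤ Real.sin (ρ/2) :=
      Real.sin_nonneg_of_nonneg_of_le_pi (by linarith) (by linarith)
    have hs12 : Real.sin (ρ/2) ≤ 1/2 := by
      have := Real.sin_le_sin_of_le_of_le_pi_div_two (by linarith : -(Real.pi/2) ≤ ρ/2)
        (by linarith : Real.pi/6 ≤ Real.pi/2) (by linarith : ρ/2 ≤ Real.pi/6)
      rwa [Real.sin_pi_div_six] at this
    have hc32 : Real.sqrt 3 / 2 ≤ Real.cos (ρ/2) := by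
      have := Real.cos_le_cos_of_nonneg_of_le_pi (by linarith : (0:ℝ) ≤ ρ/2)
        (by linarith : Real.pi/6 ≤ Real.pi) (by linarith : ρ/2 ≤ Real.pi/6)
      rwa [Real.cos_pi_div_six] at this
    have hsqrt3 : (3:ℝ)/2 ≤ Real.sqrt 3 := by
      nlinarith [Real.sq_sqrt (by norm_num : (0:ℝ) ≤ 3), Real.sqrt_nonneg 3]
    have hI1 : 1 + Real.sin (ρ/2) ≤ 2 * Real.cos (ρ/2) := by linarith
    apply main_aux ⟨hρ0, hρπ⟩ hh hh' u ξ hξ z hz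
    · rw [hρ'eq]
    · rw [hρ'eq]; exact hs0
    · rw [hρ'eq]; exact hI1
    · rw [hρ'eq]
      have hB : (1 + Real.sin (ρ/2))^2 ≤ 2*Real.cos (ρ/2)*(1 + Real.sin (ρ/2)) := by
        have := mul_le_mul_of_nonneg_right hI1 (by linarith : (0:ℝ) ≤ 1 + Real.sin (ρ/2))
        nlinarith only [this]
      nlinarith only [hB, sq_nonneg (Real.sin (ρ/2)),
        mul_nonneg (sub_nonneg.mpr hB) (sq_nonneg (Real.sin (ρ/2)))]

end
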